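/- Let t be the Thue-Morse word, i.e., t(n) is the parity of the number of 1's in the binary expansion of n. If u is a factor of t of length n ≥ 2 that begins and ends with the same letter, then μ²(u) is an abelian-square factor of t of length 4n beginning and ending with the same letter, and the word obtained from μ²(u) by removing its first and last letters is an abelian-square factor of t of length 4n − 2. -/

import Mathlib

/-- The Thue-Morse word: `tm n` is the parity of the number of `1`'s in the
binary expansion of `n` (`true` = `1`, `false` = `0`). -/
def tm (n : ℕ) : Bool := (Nat.digits 2 n).sum % 2 == 1

/-- The Thue-Morse morphism `μ : 0 ↦ 01, 1 ↦ 10`. -/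
def mu (w : List Bool) : List Bool := w.flatMap fun b => [b, !b]

/-- `u` is a factor of the infinite word `s`. -/
def FactorOf {A : Type*} (u : List A) (s : ℕ → A) : Prop :=
  ∃ i : ℕ, u = (List.range u.length).map fun k => s (i + k)

/-- An abelian square: a word `v ++ w` with `|v| = |w|` and equal Parikh
vectors. -/
def IsAbelianSquare (w : List Bool) : Prop :=
  ∃ u v : List Bool, w = u ++ v ∧ u.length = v.length ∧
    ∀ c, u.count c = v.count c

lemma mu_cons (a : Bool) (w : List Bool) : mu (a :: w) = a :: (!a) :: mu w := rfl

lemma mu_append (v w : List Bool) : mu (v ++ w) = mu v ++ mu w :=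
  List.flatMap_append

lemma mu_length (w : List Bool) : (mu w).length = 2 * w.length := by
  induction w with
  | nil => rfl
  | cons a w ih => simp only [mu_cons, List.length_cons, ih]; omega

lemma count_mu (w : List Bool) (c : Bool) : (mu w).count c = w.length := by
  induction w with
  | nil => rfl
  | cons a w ih =>
    simp only [mu_cons, List.count_cons, ih, List.length_cons]
    cases a <;> cases c <;> simp

lemma mu_head? (w : List Bool) : (mu w).head? = w.head? := by
  cases w <;> rfl

lemma mu_getLast? (w : List Bool) : (mu w).getLast? = w.getLast?.map (! ·) := by
  induction w with
  | nil => rfl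
  | cons a w ih =>
    cases w with
    | nil => rfl
    | cons b w' =>
      simp only [mu_cons, List.getLast?_cons_cons] at ih ⊢
      exact ih

lemma tm_two_mul (n : ℕ) : tm (2 * n) = tm n := by
  rcases Nat.eq_zero_or_pos n with h | h
  · simp [h]
  · unfold tm
    rw [Nat.digits_def' (by norm_num) (by omega)]
    simp [Nat.mul_div_cancel_left n (by norm_num : 0 < 2), Nat.mul_mod_right]

lemma tm_two_mul_add_one (n : ℕ) : tm (2 * n + 1) = ! tm n := by
  unfold tm
  rw [Nat.digits_def' (by norm_num) (by omega)]
  have h1 : (2 * n + 1) % 2 = 1 := by omega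
  have h2 : (2 * n + 1) / 2 = n := by omega
  rw [h1, h2]
  rcases Nat.mod_two_eq_zero_or_one (Nat.digits 2 n).sum with h | h <;>
    simp [List.sum_cons, Nat.add_mod, h]

lemma mu_range (i L : ℕ) :
    mu ((List.range L).map fun k => tm (i + k)) =
      (List.range (2 * L)).map fun k => tm (2 * i + k) := by
  induction L with
  | zero => rfl
  | succ L ih =>
    rw [List.range_succ, List.map_append, mu_append, ih,
      show 2 * (L + 1) = (2 * L + 1) + 1 by ring, List.range_succ,
      List.range_succ, List.map_append, List.map_append]
    have h1 : tm (2 * i + 2 * L) = tm (i + L) := by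
      rw [show 2 * i + 2 * L = 2 * (i + L) by ring, tm_two_mul]
    have h2 : tm (2 * i + (2 * L + 1)) = ! tm (i + L) := by
      rw [show 2 * i + (2 * L + 1) = 2 * (i + L) + 1 by ring, tm_two_mul_add_one]
    simp [mu, h1, h2]

lemma factor_mu {u : List Bool} (h : FactorOf u tm) : FactorOf (mu u) tm := by
  obtain ⟨i, hi⟩ := h
  refine ⟨2 * i, ?_⟩
  rw [mu_length]
  conv_lhs => rw [hi]
  exact mu_range i u.length

lemma factor_tail {u : List Bool} {s : ℕ → Bool} (h : FactorOf u s) :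
    FactorOf u.tail s := by
  obtain ⟨i, hi⟩ := h
  refine ⟨i + 1, ?_⟩
  rw [List.length_tail]
  conv_lhs => rw [hi]
  cases hL : u.length with
  | zero => rfl
  | succ L =>
    rw [List.range_succ_eq_map, List.map_cons, List.tail_cons, List.map_map]
    simp only [Nat.succ_sub_one]
    apply List.map_congr_left
    intro k _
    simp only [Function.comp]
    congr 1
    omega

lemma factor_dropLast {u : List Bool} {s : ℕ → Bool} (h : FactorOf u s) :
    FactorOf u.dropLast s := by
  obtain ⟨i, hi⟩ := h
  refine ⟨i, ?_⟩
  rw [List.length_dropLast]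
  conv_lhs => rw [hi]
  cases hL : u.length with
  | zero => rfl
  | succ L =>
    simp only [List.range_succ, List.map_append, List.map_cons, List.map_nil,
      List.dropLast_concat, Nat.succ_sub_one]


/-- If `u` is a factor of the Thue-Morse word of length `n ≥ 2` beginning and
ending with the same letter, then `μ²(u)` is an abelian-square factor of `tm`
of length `4n` beginning and ending with the same letter, and removing the
first and last letters of `μ²(u)` gives an abelian-square factor of `tm` of
length `4n − 2`. -/
theorem stmt7 (u : List Bool) (n : ℕ) (hn : 2 ≤ n) (hlen : u.length = n)
    (hu : FactorOf u tm) (c : Bool) (hh : u.head? = some c)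
    (hl : u.getLast? = some c) :
    (FactorOf (mu (mu u)) tm ∧ IsAbelianSquare (mu (mu u)) ∧
      (mu (mu u)).length = 4 * n ∧
      ∃ d : Bool, (mu (mu u)).head? = some d ∧ (mu (mu u)).getLast? = some d) ∧
    (FactorOf (mu (mu u)).tail.dropLast tm ∧
      IsAbelianSquare (mu (mu u)).tail.dropLast ∧
      (mu (mu u)).tail.dropLast.length = 4 * n - 2) := by
  have hfac2 : FactorOf (mu (mu u)) tm := factor_mu (factor_mu hu)
  have hlen2 : (mu (mu u)).length = 4 * n := by
    rw [mu_length, mu_length, hlen]; ring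
  -- head and last of mu (mu u)
  have hhead2 : (mu (mu u)).head? = some c := by
    rw [mu_head?, mu_head?, hh]
  have hlast2 : (mu (mu u)).getLast? = some c := by
    rw [mu_getLast?, mu_getLast?, hl]; simp
  -- split mu (mu u) into two halves
  set w := mu u with hw
  have hwlen : w.length = 2 * n := by rw [hw, mu_length, hlen]
  set A := mu (w.take n) with hA
  set B := mu (w.drop n) with hB
  have hsplit : mu w = A ++ B := by
    rw [hA, hB, ← mu_append, List.take_append_drop]
  have hAlen : A.length = 2 * n := by
    rw [hA, mu_length, List.length_take, hwlen]; omega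
  have hBlen : B.length = 2 * n := by
    rw [hB, mu_length, List.length_drop, hwlen]; omega
  have hAcount : ∀ b, A.count b = n := by
    intro b; rw [hA, count_mu, List.length_take, hwlen]; omega
  have hBcount : ∀ b, B.count b = n := by
    intro b; rw [hB, count_mu, List.length_drop, hwlen]; omega
  have hAne : A ≠ [] := by
    intro h; rw [h] at hAlen; simp at hAlen; omega
  have hBne : B ≠ [] := by
    intro h; rw [h] at hBlen; simp at hBlen; omega
  have habs : IsAbelianSquare (mu (mu u)) := by
    refine ⟨A, B, hsplit, by omega, fun b => by rw [hAcount, hBcount]⟩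
  refine ⟨⟨hfac2, habs, hlen2, c, hhead2, hlast2⟩, ?_, ?_, ?_⟩
  · exact factor_dropLast (factor_tail hfac2)
  · -- abelian square of tail.dropLast
    have hheadA : A.head? = some c := by
      rw [hsplit, List.head?_append] at hhead2
      cases hA' : A.head? with
      | none => exact absurd (List.head?_eq_none_iff.mp hA') hAne
      | some a => rw [hA'] at hhead2; simpa using hhead2
    have hlastB : B.getLast? = some c := by
      rw [hsplit, List.getLast?_append] at hlast2
      cases hB' : B.getLast? with
      | none => exact absurd (List.getLast?_eq_none_iff.mp hB') hBne
      | some b => rw [hB'] at hlast2; simpa using hlast2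
    obtain ⟨A', hA'⟩ : ∃ A', A = c :: A' := List.head?_eq_some_iff.mp hheadA
    have hBsplit : B = B.dropLast ++ [c] := by
      have h := List.dropLast_append_getLast hBne
      have : B.getLast hBne = c := by
        rw [List.getLast?_eq_getLast hBne] at hlastB
        exact Option.some_injective _ hlastB
      rw [this] at h; exact h.symm
    have htd : (mu (mu u)).tail.dropLast = A' ++ B.dropLast := by
      rw [hsplit, hA']
      rw [List.cons_append, List.tail_cons,
        List.dropLast_append_of_ne_nil hBne]
    refine ⟨A', B.dropLast, htd, ?_, ?_⟩
    · rw [List.length_dropLast, hBlen]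
      have : A.length = A'.length + 1 := by rw [hA']; rfl
      omega
    · intro b
      have h1 : A.count b = A'.count b + if (c == b) then 1 else 0 := by
        rw [hA', List.count_cons]
      have h2 : B.count b = B.dropLast.count b + if (c == b) then 1 else 0 := by
        conv_lhs => rw [hBsplit]
        rw [List.count_append]
        rw [List.count_singleton]
      have := hAcount b; have := hBcount b
      omega
  · rw [List.length_dropLast, List.length_tail, hlen2]
    omega
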